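/- arXiv:math/0010076 — 2 statements merged into one kernel-verified Lean document; each statement's English description precedes it below -/
import Mathlib

section
/- There is an absolute constant C such that for every M,N∈ℕ and every complex M×N matrix A=(a_{jk}) one has h_2(A) ≤ C·sup_{1≤j≤M} Σ_{k=0}^{N}|a_{jk}−a_{j,k+1}|, where by convention a_{j0}=a_{j,N+1}=0 for all 1≤j≤M. -/
open MeasureTheory
open scoped ENNReal NNReal

noncomputable section

/-- Lebesgue measure on `Ω = [0,1)`. -/
def μΩ : Measure ℝ := volume.restrict (Set.Ico (0:ℝ) 1)

/-- Dyadic conditional expectation `E_k f` on `[0,1)`: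
`E_k f = Σ_i (2^k ∫_{I_{k,i}} f) χ_{I_{k,i}}`, written via the dyadic interval of
generation `k` containing the point `x`. -/
def condE (k : ℕ) (f : ℝ → ℂ) (x : ℝ) : ℂ :=
  (2:ℂ) ^ k *
    ∫ t in Set.Ico ((⌊(2:ℝ) ^ k * x⌋ : ℝ) / (2:ℝ) ^ k)
        (((⌊(2:ℝ) ^ k * x⌋ : ℝ) + 1) / (2:ℝ) ^ k), f t

/-- Dyadic martingale difference `Δ_k = E_k − E_{k−1}` (used for `k ≥ 1`). -/
def mdiff (k : ℕ) (f : ℝ → ℂ) (x : ℝ) : ℂ := condE k f x - condE (k - 1) f x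

/-- `x ↦ max_{1≤j≤M} |Σ_{k=1}^N a_{jk} Δ_k f(x)|`. -/
def maxFn {M N : ℕ} (A : Fin M → Fin N → ℂ) (f : ℝ → ℂ) (x : ℝ) : ℝ :=
  ⨆ j : Fin M, ‖∑ k : Fin N, A j k * mdiff ((k : ℕ) + 1) f x‖

/-- The strong constant `h_p(A)`: the least `K` with
`‖max_j |Σ_k a_{jk} Δ_k f|‖_{L_p} ≤ K ‖f‖_{L_p}` for all `f ∈ L_p(Ω)`. -/
def hStrong (p : ℝ) {M N : ℕ} (A : Fin M → Fin N → ℂ) : ℝ≥0∞ :=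
  sInf {K : ℝ≥0∞ | ∀ f : ℝ → ℂ, MemLp f (ENNReal.ofReal p) μΩ →
    eLpNorm (maxFn A f) (ENNReal.ofReal p) μΩ ≤ K * eLpNorm f (ENNReal.ofReal p) μΩ}

/-- Weak `L_p` quasinorm `sup_{λ>0} λ·|{|g|>λ}|^{1/p}` on `[0,1)`. -/
def weakNorm (p : ℝ) (g : ℝ → ℝ) : ℝ≥0∞ :=
  ⨆ (l : ℝ) (_ : 0 < l), ENNReal.ofReal l * μΩ {x | l < |g x|} ^ (1 / p)

/-- The weak constant `h_p^w(A)`. -/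
def hWeak (p : ℝ) {M N : ℕ} (A : Fin M → Fin N → ℂ) : ℝ≥0∞ :=
  sInf {K : ℝ≥0∞ | ∀ f : ℝ → ℂ, MemLp f (ENNReal.ofReal p) μΩ →
    weakNorm p (maxFn A f) ≤ K * eLpNorm f (ENNReal.ofReal p) μΩ}

/-- Entries of `A` extended by the convention `a_{j,0} = a_{j,N+1} = 0`,
with the original entries `a_{j,k}` for `1 ≤ k ≤ N`. -/
def aExt {M N : ℕ} (A : Fin M → Fin N → ℂ) (j : Fin M) (k : ℕ) : ℂ :=
  if h : 1 ≤ k ∧ k ≤ N then A j ⟨k - 1, by omega⟩ else 0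


namespace HLBV

/-- Dyadic interval of generation `k`, index `i`. -/
def DI (k : ℕ) (i : ℤ) : Set ℝ := Set.Ico ((i:ℝ)/2^k) (((i:ℝ)+1)/2^k)

/-- `E_k` applied to a nonnegative density `φ`. -/
def cE (φ : ℝ → ℝ≥0∞) (k : ℕ) (x : ℝ) : ℝ≥0∞ :=
  2^k * ∫⁻ t in DI k ⌊(2:ℝ)^k * x⌋, φ t

/-- maximal function over generations `m..N`. -/
def TT (φ : ℝ → ℝ≥0∞) (m N : ℕ) (x : ℝ) : ℝ≥0∞ :=
  (Finset.Icc m N).sup fun k => cE φ k x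

lemma measurableSet_DI (k : ℕ) (i : ℤ) : MeasurableSet (DI k i) := measurableSet_Ico

lemma volume_DI (k : ℕ) (i : ℤ) : volume (DI k i) = (2^k)⁻¹ := by
  rw [DI, Real.volume_Ico]
  have : ((i:ℝ)+1)/2^k - (i:ℝ)/2^k = (2^k)⁻¹ := by
    field_simp
    ring
  rw [this, ENNReal.ofReal_inv_of_pos (by positivity), ENNReal.ofReal_pow (by norm_num)]
  norm_num

lemma floor_eq_of_mem_DI {k : ℕ} {i : ℤ} {x : ℝ} (hx : x ∈ DI k i) :
    ⌊(2:ℝ)^k * x⌋ = i := by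
  rcases hx with ⟨h1, h2⟩
  have hp : (0:ℝ) < 2^k := by positivity
  rw [Int.floor_eq_iff]
  constructor
  · calc (i:ℝ) = ((i:ℝ)/2^k) * 2^k := by field_simp
    _ ≤ x * 2^k := by gcongr
    _ = 2^k * x := by ring
  · calc (2:ℝ)^k * x = x * 2^k := by ring
    _ < (((i:ℝ)+1)/2^k) * 2^k := by gcongr
    _ = (i:ℝ)+1 := by field_simp

lemma cE_eq_of_mem_DI {φ : ℝ → ℝ≥0∞} {k : ℕ} {i : ℤ} {x : ℝ} (hx : x ∈ DI k i) :
    cE φ k x = 2^k * ∫⁻ t in DI k i, φ t := by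
  rw [cE, floor_eq_of_mem_DI hx]

lemma DI_split (m : ℕ) (i : ℤ) :
    DI (m+1) (2*i) ∪ DI (m+1) (2*i+1) = DI m i := by
  have h1 : ((2*i:ℤ):ℝ)/2^(m+1) = (i:ℝ)/2^m := by push_cast; ring
  have h2 : (((2*i:ℤ):ℝ)+1)/2^(m+1) = (((2*i+1:ℤ)):ℝ)/2^(m+1) := by push_cast; ring
  have h3 : (((2*i+1:ℤ):ℝ)+1)/2^(m+1) = ((i:ℝ)+1)/2^m := by push_cast; ring
  rw [DI, DI, DI, h1, h2, h3]
  apply Set.Ico_union_Ico_eq_Ico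
  · rw [← h1, ← h2]
    apply (div_le_div_iff_of_pos_right (by positivity)).mpr
    push_cast; linarith
  · rw [← h3, ← h2]
    apply (div_le_div_iff_of_pos_right (by positivity)).mpr
    push_cast; linarith

lemma DI_disjoint (m : ℕ) (i : ℤ) : Disjoint (DI (m+1) (2*i)) (DI (m+1) (2*i+1)) := by
  have h2 : (((2*i:ℤ):ℝ)+1)/2^(m+1) = (((2*i+1:ℤ)):ℝ)/2^(m+1) := by push_cast; ring
  rw [DI, DI, h2]
  rw [Set.disjoint_left]
  rintro x ⟨_, hx2⟩ ⟨hx3, _⟩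
  exact absurd (hx2.trans_le hx3) (lt_irrefl x)

lemma measurable_cE {φ : ℝ → ℝ≥0∞} (k : ℕ) : Measurable (cE φ k) := by
  have : cE φ k = (fun i : ℤ => 2^k * ∫⁻ t in DI k i, φ t) ∘ (fun x : ℝ => ⌊(2:ℝ)^k * x⌋) := rfl
  rw [this]
  exact Measurable.of_discrete.comp (Int.measurable_floor.comp (measurable_const_mul _))

lemma measurable_TT {φ : ℝ → ℝ≥0∞} (m N : ℕ) : Measurable (TT φ m N) := by
  classical
  unfold TT
  induction (Finset.Icc m N) using Finset.induction with
  | empty => simpa using measurable_const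
  | insert _ _ h ih =>
      simp only [Finset.sup_insert]
      exact (measurable_cE _).sup ih

lemma TT_le_bound {φ : ℝ → ℝ≥0∞} {m N : ℕ} {x : ℝ} :
    TT φ m N x ≤ 2^N * ∫⁻ t, φ t := by
  apply Finset.sup_le
  intro k hk
  rw [Finset.mem_Icc] at hk
  calc cE φ k x ≤ 2^k * ∫⁻ t, φ t := by
        unfold cE; gcongr; exact Measure.restrict_le_self
    _ ≤ 2^N * ∫⁻ t, φ t := by gcongr <;> [norm_num; exact hk.2]


lemma two_pow_ne_zero (m : ℕ) : ((2:ℝ≥0∞)^m) ≠ 0 := by positivity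
lemma two_pow_ne_top (m : ℕ) : ((2:ℝ≥0∞)^m) ≠ ∞ := by
  exact ENNReal.pow_ne_top (by norm_num)

lemma TT_succ (φ : ℝ → ℝ≥0∞) {m N : ℕ} (h : m ≤ N) (x : ℝ) :
    TT φ m N x = cE φ m x ⊔ TT φ (m+1) N x := by
  have : Finset.Icc m N = insert m (Finset.Icc (m+1) N) := by
    ext a; simp only [Finset.mem_Icc, Finset.mem_insert]; omega
  rw [TT, this, Finset.sup_insert]; rfl

lemma cE_le_TT (φ : ℝ → ℝ≥0∞) {m k N : ℕ} (h1 : m ≤ k) (h2 : k ≤ N) (x : ℝ) :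
    cE φ k x ≤ TT φ m N x := by
  unfold TT
  exact Finset.le_sup (f := fun k => cE φ k x) (Finset.mem_Icc.mpr ⟨h1, h2⟩)

/-- The weak-type inequality for the dyadic maximal function, by induction on depth. -/
lemma weak_ineq (φ : ℝ → ℝ≥0∞) (hφ : Measurable φ) (lam : ℝ≥0∞) :
    ∀ (d m : ℕ) (i : ℤ),
      lam * volume (DI m i ∩ {x | lam < TT φ m (m+d) x}) ≤
        ∫⁻ t in DI m i ∩ {x | lam < TT φ m (m+d) x}, φ t := by
  intro d
  induction d with
  | zero =>
    intro m i
    set c := 2^m * ∫⁻ t in DI m i, φ t with hc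
    have hcE : ∀ x ∈ DI m i, TT φ m (m+0) x = c := by
      intro x hx
      rw [TT]
      simp only [Nat.add_zero, Finset.Icc_self, Finset.sup_singleton]
      exact cE_eq_of_mem_DI hx
    by_cases hlc : lam < c
    · have hS : DI m i ∩ {x | lam < TT φ m (m+0) x} = DI m i := by
        apply Set.inter_eq_left.mpr
        intro x hx
        simp only [Set.mem_setOf_eq, hcE x hx]; exact hlc
      rw [hS, volume_DI]
      calc lam * ((2:ℝ≥0∞)^m)⁻¹ ≤ c * ((2:ℝ≥0∞)^m)⁻¹ := mul_le_mul_left hlc.le _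
        _ = (∫⁻ t in DI m i, φ t) * (2^m * (2^m)⁻¹) := by rw [hc]; ring
        _ = ∫⁻ t in DI m i, φ t := by
            rw [ENNReal.mul_inv_cancel (two_pow_ne_zero m) (two_pow_ne_top m), mul_one]
    · have hS : DI m i ∩ {x | lam < TT φ m (m+0) x} = ∅ := by
        ext x
        simp only [Set.mem_inter_iff, Set.mem_setOf_eq, Set.mem_empty_iff_false, iff_false,
          not_and]
        intro hx hlt
        rw [hcE x hx] at hlt
        exact hlc hlt
      rw [hS]; simp
  | succ e ih =>
    intro m i
    have hNe : m + (e+1) = (m+1) + e := by omega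
    set c := 2^m * ∫⁻ t in DI m i, φ t with hc
    have hcE : ∀ x ∈ DI m i, cE φ m x = c := fun x hx => cE_eq_of_mem_DI hx
    by_cases hlc : lam < c
    · have hS : DI m i ∩ {x | lam < TT φ m (m+(e+1)) x} = DI m i := by
        apply Set.inter_eq_left.mpr
        intro x hx
        have h1 : c ≤ TT φ m (m+(e+1)) x := by
          rw [← hcE x hx]; exact cE_le_TT φ le_rfl (by omega) x
        exact hlc.trans_le h1
      rw [hS, volume_DI]
      calc lam * ((2:ℝ≥0∞)^m)⁻¹ ≤ c * ((2:ℝ≥0∞)^m)⁻¹ := mul_le_mul_left hlc.le _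
        _ = (∫⁻ t in DI m i, φ t) * (2^m * (2^m)⁻¹) := by rw [hc]; ring
        _ = ∫⁻ t in DI m i, φ t := by
            rw [ENNReal.mul_inv_cancel (two_pow_ne_zero m) (two_pow_ne_top m), mul_one]
    · -- c ≤ lam : split into the two halves
      set S₁ := DI (m+1) (2*i) ∩ {x | lam < TT φ (m+1) ((m+1)+e) x} with hS₁
      set S₂ := DI (m+1) (2*i+1) ∩ {x | lam < TT φ (m+1) ((m+1)+e) x} with hS₂
      have hmS₂ : MeasurableSet S₂ :=
        (measurableSet_DI _ _).inter (measurableSet_lt measurable_const (measurable_TT _ _))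
      have hdisj : Disjoint S₁ S₂ :=
        (DI_disjoint m i).mono Set.inter_subset_left Set.inter_subset_left
      have key : ∀ x ∈ DI m i,
          (lam < TT φ m (m+(e+1)) x ↔ lam < TT φ (m+1) ((m+1)+e) x) := by
        intro x hx
        rw [TT_succ φ (by omega) x, hcE x hx, lt_sup_iff, hNe]
        exact or_iff_right hlc
      have hsplit : DI m i ∩ {x | lam < TT φ m (m+(e+1)) x} = S₁ ∪ S₂ := by
        rw [hS₁, hS₂, ← Set.union_inter_distrib_right, DI_split]
        ext x
        simp only [Set.mem_inter_iff, Set.mem_setOf_eq]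
        constructor
        · rintro ⟨h1, h2⟩; exact ⟨h1, (key x h1).mp h2⟩
        · rintro ⟨h1, h2⟩; exact ⟨h1, (key x h1).mpr h2⟩
      rw [hsplit, measure_union hdisj hmS₂, lintegral_union hmS₂ hdisj, mul_add]
      exact add_le_add (ih (m+1) (2*i)) (ih (m+1) (2*i+1))

lemma DI_zero : DI 0 0 = Set.Ico (0:ℝ) 1 := by
  simp [DI]

lemma isFiniteμΩ : IsFiniteMeasure μΩ := by
  constructor
  rw [μΩ, Measure.restrict_apply_univ, Real.volume_Ico]
  simp

/-- Doob's L² inequality for the dyadic maximal function. -/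
lemma doob (φ : ℝ → ℝ≥0∞) (hφ : Measurable φ) (hfin : ∫⁻ t, φ t ≠ ∞)
    (hsupp : ∀ x, x ∉ Set.Ico (0:ℝ) 1 → φ x = 0) (N : ℕ) :
    (∫⁻ x, (TT φ 0 N x)^(2:ℝ) ∂μΩ)^(1/2:ℝ) ≤
      2 * (∫⁻ x, (φ x)^(2:ℝ) ∂μΩ)^(1/2:ℝ) := by
  set T := TT φ 0 N with hT
  have hTm : Measurable T := measurable_TT 0 N
  set Bd : ℝ≥0∞ := 2^N * ∫⁻ t, φ t with hBd
  have hBdtop : Bd ≠ ∞ := ENNReal.mul_ne_top (by simp [ENNReal.pow_ne_top]) hfin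
  have hTle : ∀ x, T x ≤ Bd := fun x => TT_le_bound
  have hTtop : ∀ x, T x ≠ ∞ := fun x => ((hTle x).trans_lt hBdtop.lt_top).ne
  set Mr : ℝ → ℝ := fun x => (T x).toReal with hMr
  have hMrm : Measurable Mr := hTm.ennreal_toReal
  have hMrnn : ∀ x, 0 ≤ Mr x := fun x => ENNReal.toReal_nonneg
  have hOR : ∀ x, ENNReal.ofReal (Mr x) = T x := fun x => ENNReal.ofReal_toReal (hTtop x)
  set J := ∫⁻ x, (T x)^(2:ℝ) ∂μΩ with hJ
  set F := ∫⁻ x, (φ x)^(2:ℝ) ∂μΩ with hF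
  -- Layer cake
  have lc := lintegral_comp_eq_lintegral_meas_lt_mul μΩ (f := Mr) (g := fun t => t)
    (Filter.Eventually.of_forall hMrnn) hMrm.aemeasurable
    (fun t _ => intervalIntegral.intervalIntegrable_id)
    ((ae_restrict_mem measurableSet_Ioi).mono fun t ht => le_of_lt ht)
  have hid2 : ∀ x, ENNReal.ofReal (∫ t in (0:ℝ)..(Mr x), t) * 2 = (T x)^(2:ℝ) := by
    intro x
    rw [integral_id, ← hOR x, show (2:ℝ) = ((2:ℕ):ℝ) by norm_num, ENNReal.rpow_natCast]
    calc ENNReal.ofReal ((Mr x ^ 2 - 0 ^ 2) / 2) * 2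
        = ENNReal.ofReal ((Mr x ^ 2 - 0 ^ 2) / 2) * ENNReal.ofReal 2 := by
          rw [ENNReal.ofReal_ofNat]
      _ = ENNReal.ofReal ((Mr x ^ 2 - 0 ^ 2) / 2 * 2) := by
          rw [← ENNReal.ofReal_mul' (by norm_num)]
      _ = ENNReal.ofReal (Mr x ^ 2) := by congr 1; ring
      _ = ENNReal.ofReal (Mr x) ^ 2 := ENNReal.ofReal_pow (hMrnn x) 2
  have hJeq : J = (∫⁻ t in Set.Ioi (0:ℝ), μΩ {a | t < Mr a} * ENNReal.ofReal t) * 2 := by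
    rw [← lc, ← lintegral_mul_const' 2 _ (by norm_num)]
    exact lintegral_congr fun x => (hid2 x).symm
  -- the product-set kernel
  set E : Set (ℝ × ℝ) := {q : ℝ × ℝ | ENNReal.ofReal q.1 < T q.2} with hE
  have hEm : MeasurableSet E :=
    measurableSet_lt (ENNReal.measurable_ofReal.comp measurable_fst) (hTm.comp measurable_snd)
  set G : ℝ × ℝ → ℝ≥0∞ := E.indicator (fun q => φ q.2) with hG
  have hGm : Measurable G := (hφ.comp measurable_snd).indicator hEm
  -- weak-type bound for each t > 0
  have key : ∀ t ∈ Set.Ioi (0:ℝ),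
      μΩ {a | t < Mr a} * ENNReal.ofReal t ≤ ∫⁻ x, G (t, x) ∂volume := by
    intro t ht
    have hSt : {a | t < Mr a} = {a | ENNReal.ofReal t < T a} := by
      ext a
      simp only [Set.mem_setOf_eq]
      exact (ENNReal.ofReal_lt_iff_lt_toReal (le_of_lt ht) (hTtop a)).symm
    have hStm : MeasurableSet {a | ENNReal.ofReal t < T a} :=
      measurableSet_lt measurable_const hTm
    have hw := weak_ineq φ hφ (ENNReal.ofReal t) N 0 0
    rw [Nat.zero_add, DI_zero] at hw
    have hμ : μΩ {a | t < Mr a} =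
        volume (Set.Ico (0:ℝ) 1 ∩ {x | ENNReal.ofReal t < T x}) := by
      rw [hSt, μΩ, Measure.restrict_apply hStm, Set.inter_comm]
    rw [hμ, mul_comm]
    refine hw.trans ?_
    -- ∫⁻ over the subset equals ∫⁻ of G(t,·) thanks to the support of φ
    have : ∀ x, (Set.Ico (0:ℝ) 1 ∩ {x | ENNReal.ofReal t < T x}).indicator φ x = G (t, x) := by
      intro x
      have hmem : (t, x) ∈ E ↔ ENNReal.ofReal t < T x := Iff.rfl
      by_cases hx1 : ENNReal.ofReal t < T x
      · by_cases hx2 : x ∈ Set.Ico (0:ℝ) 1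
        · rw [Set.indicator_of_mem (Set.mem_inter hx2 hx1), hG,
            Set.indicator_of_mem (hmem.mpr hx1)]
        · rw [Set.indicator_of_notMem (fun h => hx2 h.1), hG,
            Set.indicator_of_mem (hmem.mpr hx1), hsupp x hx2]
      · rw [Set.indicator_of_notMem (fun h => hx1 h.2), hG,
          Set.indicator_of_notMem (fun h => hx1 (hmem.mp h))]
    rw [← lintegral_indicator (measurableSet_Ico.inter hStm)]
    exact le_of_eq (lintegral_congr this)
  -- integrate in t, swap
  have swap : ∫⁻ t in Set.Ioi (0:ℝ), ∫⁻ x, G (t, x) ∂volume ∂volume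
      = ∫⁻ x, φ x * T x ∂volume := by
    rw [lintegral_lintegral_swap (f := fun t x => G (t, x))
      (by exact hGm.aemeasurable)]
    apply lintegral_congr
    intro x
    have hsm : MeasurableSet {t : ℝ | ENNReal.ofReal t < T x} :=
      measurableSet_lt ENNReal.measurable_ofReal measurable_const
    have : ∀ t : ℝ, G (t, x) = ({t : ℝ | ENNReal.ofReal t < T x}).indicator
        (fun _ => φ x) t := by
      intro t
      have hmem : (t, x) ∈ E ↔ t ∈ {t : ℝ | ENNReal.ofReal t < T x} := Iff.rfl
      by_cases h : t ∈ {t : ℝ | ENNReal.ofReal t < T x}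
      · rw [hG, Set.indicator_of_mem (hmem.mpr h), Set.indicator_of_mem h]
      · rw [hG, Set.indicator_of_notMem (fun hh => h (hmem.mp hh)),
          Set.indicator_of_notMem h]
    rw [lintegral_congr this, lintegral_indicator hsm, setLIntegral_const,
      Measure.restrict_apply hsm]
    have hset : {t : ℝ | ENNReal.ofReal t < T x} ∩ Set.Ioi 0 = Set.Ioo 0 (Mr x) := by
      ext t
      simp only [Set.mem_inter_iff, Set.mem_setOf_eq, Set.mem_Ioi, Set.mem_Ioo]
      constructor
      · rintro ⟨h1, h2⟩
        exact ⟨h2, (ENNReal.ofReal_lt_iff_lt_toReal (le_of_lt h2) (hTtop x)).mp h1⟩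
      · rintro ⟨h1, h2⟩
        exact ⟨(ENNReal.ofReal_lt_iff_lt_toReal (le_of_lt h1) (hTtop x)).mpr h2, h1⟩
    rw [hset, Real.volume_Ioo, sub_zero, hOR x]
  -- φ vanishes outside [0,1), so the volume integral is the μΩ integral
  have hres : ∫⁻ x, φ x * T x ∂volume = ∫⁻ x, φ x * T x ∂μΩ := by
    rw [μΩ, ← lintegral_indicator measurableSet_Ico]
    apply lintegral_congr
    intro x
    by_cases hx : x ∈ Set.Ico (0:ℝ) 1
    · rw [Set.indicator_of_mem hx]
    · rw [Set.indicator_of_notMem hx, hsupp x hx, zero_mul]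
  -- Hölder
  have holder : ∫⁻ x, φ x * T x ∂μΩ ≤ F^(1/2:ℝ) * J^(1/2:ℝ) := by
    rw [hF, hJ]
    have hpq : Real.HolderConjugate 2 2 := Real.HolderConjugate.two_two
    have := ENNReal.lintegral_mul_le_Lp_mul_Lq μΩ hpq hφ.aemeasurable hTm.aemeasurable
    simpa using this
  have main : J ≤ F^(1/2:ℝ) * J^(1/2:ℝ) * 2 := by
    refine hJeq.trans_le (mul_le_mul_left ?_ 2)
    calc ∫⁻ t in Set.Ioi (0:ℝ), μΩ {a | t < Mr a} * ENNReal.ofReal t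
        ≤ ∫⁻ t in Set.Ioi (0:ℝ), ∫⁻ x, G (t, x) ∂volume ∂volume := by
          apply setLIntegral_mono' measurableSet_Ioi key
      _ = ∫⁻ x, φ x * T x ∂volume := swap
      _ = ∫⁻ x, φ x * T x ∂μΩ := hres
      _ ≤ F^(1/2:ℝ) * J^(1/2:ℝ) := holder
  -- finish: divide by J^(1/2)
  have hJtop : J ≠ ∞ := by
    have : J ≤ Bd^(2:ℝ) * μΩ Set.univ := by
      rw [hJ, ← setLIntegral_const]
      simp only [Measure.restrict_univ]
      exact lintegral_mono fun x => ENNReal.rpow_le_rpow (hTle x) (by norm_num)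
    refine (this.trans_lt ?_).ne
    have h1 : Bd^(2:ℝ) ≠ ∞ := ENNReal.rpow_ne_top_of_nonneg (by norm_num) hBdtop
    have h2 : μΩ Set.univ ≠ ∞ := by
      have := isFiniteμΩ
      exact (measure_lt_top μΩ Set.univ).ne
    exact ENNReal.mul_lt_top h1.lt_top h2.lt_top
  by_cases hJ0 : J = 0
  · rw [hJ0, ENNReal.zero_rpow_of_pos (by norm_num)]
    exact zero_le
  · have hsplit : J = J^(1/2:ℝ) * J^(1/2:ℝ) := by
      rw [← ENNReal.rpow_add _ _ hJ0 hJtop]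
      norm_num
    have h0 : J^(1/2:ℝ) ≠ 0 := by
      simp [ENNReal.rpow_eq_zero_iff, hJ0, hJtop]
    have htop : J^(1/2:ℝ) ≠ ∞ := ENNReal.rpow_ne_top_of_nonneg (by norm_num) hJtop
    rw [← ENNReal.mul_le_mul_iff_left h0 htop, ← hsplit]
    calc J ≤ F^(1/2:ℝ) * J^(1/2:ℝ) * 2 := main
      _ = 2 * F^(1/2:ℝ) * J^(1/2:ℝ) := by ring

/-- The dyadic interval containing `x ∈ [0,1)` is contained in `[0,1)`. -/
lemma DI_floor_subset {k : ℕ} {x : ℝ} (hx : x ∈ Set.Ico (0:ℝ) 1) :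
    DI k ⌊(2:ℝ)^k * x⌋ ⊆ Set.Ico (0:ℝ) 1 := by
  rcases hx with ⟨hx0, hx1⟩
  have hp : (0:ℝ) < 2^k := by positivity
  have h0 : (0:ℤ) ≤ ⌊(2:ℝ)^k * x⌋ := Int.floor_nonneg.mpr (by positivity)
  have h1 : ⌊(2:ℝ)^k * x⌋ < (2^k : ℤ) := by
    rw [Int.floor_lt]
    push_cast
    calc (2:ℝ)^k * x < 2^k * 1 := by gcongr
      _ = 2^k := mul_one _
  rw [DI]
  have e0 : (0:ℝ) ≤ (⌊(2:ℝ)^k * x⌋ : ℝ) / 2^k := by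
    apply div_nonneg _ hp.le
    exact_mod_cast h0
  have e1 : ((⌊(2:ℝ)^k * x⌋ : ℝ) + 1) / 2^k ≤ 1 := by
    rw [div_le_one hp]
    have : (⌊(2:ℝ)^k * x⌋ : ℝ) + 1 ≤ ((2:ℝ)^k : ℝ) := by
      have := h1
      push_cast
      · exact_mod_cast Int.add_one_le_iff.mpr h1
    simpa using this
  exact Set.Ico_subset_Ico e0 e1

/-- Abel summation, pure algebra. -/
lemma sum_abel (b c : ℕ → ℂ) (N : ℕ) (hb0 : b 0 = 0) (hbN : b (N+1) = 0) :
    ∑ k ∈ Finset.range N, b (k+1) * (c (k+1) - c k)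
      = ∑ k ∈ Finset.range (N+1), (b k - b (k+1)) * c k := by
  have h1 : ∑ k ∈ Finset.range (N+1), b k * c k
      = ∑ k ∈ Finset.range N, b (k+1) * c (k+1) := by
    rw [Finset.sum_range_succ' (fun k => b k * c k) N, hb0, zero_mul, add_zero]
  have h2 : ∑ k ∈ Finset.range (N+1), b (k+1) * c k
      = ∑ k ∈ Finset.range N, b (k+1) * c k := by
    rw [Finset.sum_range_succ, hbN, zero_mul, add_zero]
  calc ∑ k ∈ Finset.range N, b (k+1) * (c (k+1) - c k)
      = ∑ k ∈ Finset.range N, (b (k+1) * c (k+1) - b (k+1) * c k) := by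
        apply Finset.sum_congr rfl; intros; ring
    _ = (∑ k ∈ Finset.range N, b (k+1) * c (k+1))
        - ∑ k ∈ Finset.range N, b (k+1) * c k := Finset.sum_sub_distrib _ _
    _ = (∑ k ∈ Finset.range (N+1), b k * c k)
        - ∑ k ∈ Finset.range (N+1), b (k+1) * c k := by rw [h1, h2]
    _ = ∑ k ∈ Finset.range (N+1), (b k * c k - b (k+1) * c k) := (Finset.sum_sub_distrib _ _).symm
    _ = ∑ k ∈ Finset.range (N+1), (b k - b (k+1)) * c k := by
        apply Finset.sum_congr rfl; intros; ring

lemma abel_rewrite {M N : ℕ} (A : Fin M → Fin N → ℂ) (j : Fin M) (f : ℝ → ℂ) (x : ℝ) :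
    ∑ k : Fin N, A j k * mdiff ((k : ℕ) + 1) f x
      = ∑ k ∈ Finset.range (N+1), (aExt A j k - aExt A j (k+1)) * condE k f x := by
  have hb0 : aExt A j 0 = 0 := by rw [aExt, dif_neg]; omega
  have hbN : aExt A j (N+1) = 0 := by rw [aExt, dif_neg]; omega
  rw [← sum_abel (aExt A j) (fun k => condE k f x) N hb0 hbN]
  rw [← Fin.sum_univ_eq_sum_range
    (fun k => aExt A j (k+1) * (condE (k+1) f x - condE k f x)) N]
  apply Finset.sum_congr rfl
  intro k _
  have h1 : aExt A j ((k:ℕ)+1) = A j k := by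
    rw [aExt, dif_pos ⟨by omega, by omega⟩]
    congr 1
  have h2 : mdiff ((k:ℕ)+1) f x = condE ((k:ℕ)+1) f x - condE (k:ℕ) f x := by
    rw [mdiff, Nat.add_sub_cancel]
  rw [h1, h2]

lemma main_est {M N : ℕ} (A : Fin M → Fin N → ℂ) (f : ℝ → ℂ)
    (hf : MemLp f 2 μΩ) :
    eLpNorm (maxFn A f) 2 μΩ ≤
      ENNReal.ofReal (2 * ⨆ j : Fin M, ∑ k ∈ Finset.range (N + 1),
        ‖aExt A j k - aExt A j (k + 1)‖) * eLpNorm f 2 μΩ := by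
  haveI := isFiniteμΩ
  set V := ⨆ j : Fin M, ∑ k ∈ Finset.range (N+1), ‖aExt A j k - aExt A j (k+1)‖ with hV
  have hV0 : 0 ≤ V :=
    Real.iSup_nonneg fun j => Finset.sum_nonneg fun k _ => norm_nonneg _
  have hVle : ∀ j, ∑ k ∈ Finset.range (N+1), ‖aExt A j k - aExt A j (k+1)‖ ≤ V :=
    fun j => by
      rw [hV]
      exact le_ciSup (f := fun j => ∑ k ∈ Finset.range (N+1), ‖aExt A j k - aExt A j (k+1)‖)
        (Set.Finite.bddAbove (Set.finite_range _)) j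
  have hint : Integrable f μΩ := hf.integrable one_le_two
  obtain ⟨g, hgm, hfg⟩ : ∃ g, StronglyMeasurable g ∧ f =ᵐ[μΩ] g :=
    ⟨hf.aestronglyMeasurable.mk f, hf.aestronglyMeasurable.stronglyMeasurable_mk,
      hf.aestronglyMeasurable.ae_eq_mk⟩
  set φ : ℝ → ℝ≥0∞ := (Set.Ico (0:ℝ) 1).indicator (fun t => (‖g t‖₊ : ℝ≥0∞)) with hφ
  have hφm : Measurable φ := (hgm.measurable.nnnorm.coe_nnreal_ennreal).indicator measurableSet_Ico
  have hsupp : ∀ x, x ∉ Set.Ico (0:ℝ) 1 → φ x = 0 := fun x hx =>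
    Set.indicator_of_notMem hx _
  have hφint : ∫⁻ t, φ t ∂volume = ∫⁻ t, (‖f t‖₊:ℝ≥0∞) ∂μΩ := by
    rw [hφ, lintegral_indicator measurableSet_Ico]
    exact (lintegral_congr_ae (hfg.mono fun x hx => by rw [hx])).symm
  have hfin : ∫⁻ t, φ t ∂volume ≠ ∞ := by
    rw [hφint]
    exact hint.2.ne
  have hTtop : ∀ x, TT φ 0 N x ≠ ∞ := fun x =>
    (TT_le_bound.trans_lt (ENNReal.mul_lt_top
      (ENNReal.pow_ne_top (by norm_num)).lt_top hfin.lt_top)).ne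
  -- pointwise bound on conditional expectations
  have key1 : ∀ x ∈ Set.Ico (0:ℝ) 1, ∀ k, k ≤ N →
      ‖condE k f x‖ ≤ (TT φ 0 N x).toReal := by
    intro x hx k hk
    set i := ⌊(2:ℝ)^k * x⌋ with hi
    have hD : DI k i ⊆ Set.Ico 0 1 := DI_floor_subset hx
    have hDm := measurableSet_DI k i
    have hae : f =ᵐ[volume.restrict (DI k i)] g :=
      ae_restrict_of_ae_restrict_of_subset hD hfg
    calc ‖condE k f x‖ = 2^k * ‖∫ t in DI k i, f t‖ := by
          rw [condE, norm_mul, norm_pow]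
          norm_num
          rfl
      _ ≤ 2^k * ∫ t in DI k i, ‖f t‖ :=
          mul_le_mul_of_nonneg_left (norm_integral_le_integral_norm f) (by positivity)
      _ = 2^k * ∫ t in DI k i, ‖g t‖ := by
          rw [integral_congr_ae (hae.mono fun t ht => by rw [ht])]
      _ = 2^k * (∫⁻ t in DI k i, (‖g t‖₊:ℝ≥0∞)).toReal := by
          rw [integral_norm_eq_lintegral_enorm hgm.aestronglyMeasurable.restrict]
          rfl
      _ = (cE φ k x).toReal := by
          have hset : ∫⁻ t in DI k i, φ t = ∫⁻ t in DI k i, (‖g t‖₊:ℝ≥0∞) := by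
            apply setLIntegral_congr_fun hDm (fun t ht => ?_)
            rw [hφ, Set.indicator_of_mem (hD ht)]
          have hpow : ((2:ℝ≥0∞)^k).toReal = (2:ℝ)^k := by
            rw [ENNReal.toReal_pow]; norm_num
          rw [cE, ← hi, ENNReal.toReal_mul, hset, hpow]
      _ ≤ (TT φ 0 N x).toReal :=
          ENNReal.toReal_mono (hTtop x) (cE_le_TT φ (Nat.zero_le k) hk x)
  -- pointwise bound on the maximal function
  have key2 : ∀ x ∈ Set.Ico (0:ℝ) 1, maxFn A f x ≤ V * (TT φ 0 N x).toReal := by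
    intro x hx
    have hMr0 : 0 ≤ (TT φ 0 N x).toReal := ENNReal.toReal_nonneg
    apply Real.iSup_le _ (mul_nonneg hV0 hMr0)
    intro j
    rw [abel_rewrite]
    calc ‖∑ k ∈ Finset.range (N+1), (aExt A j k - aExt A j (k+1)) * condE k f x‖
        ≤ ∑ k ∈ Finset.range (N+1), ‖(aExt A j k - aExt A j (k+1)) * condE k f x‖ :=
          norm_sum_le _ _
      _ ≤ ∑ k ∈ Finset.range (N+1),
            ‖aExt A j k - aExt A j (k+1)‖ * (TT φ 0 N x).toReal := by
          apply Finset.sum_le_sum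
          intro k hk
          rw [norm_mul]
          exact mul_le_mul_of_nonneg_left
            (key1 x hx k (by simpa using Nat.lt_succ_iff.mp (Finset.mem_range.mp hk)))
            (norm_nonneg _)
      _ = (∑ k ∈ Finset.range (N+1), ‖aExt A j k - aExt A j (k+1)‖)
            * (TT φ 0 N x).toReal := (Finset.sum_mul _ _ _).symm
      _ ≤ V * (TT φ 0 N x).toReal := mul_le_mul_of_nonneg_right (hVle j) hMr0
  -- the a.e. bound in ℝ≥0∞
  have hW : ∀ᵐ x ∂μΩ, ((‖maxFn A f x‖₊ : ℝ≥0∞)) ≤ ENNReal.ofReal V * TT φ 0 N x := by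
    filter_upwards [ae_restrict_mem measurableSet_Ico] with x hx
    have h0 : 0 ≤ maxFn A f x := Real.iSup_nonneg fun j => norm_nonneg _
    rw [← enorm_eq_nnnorm, Real.enorm_eq_ofReal h0, ← ENNReal.ofReal_toReal (hTtop x),
      ← ENNReal.ofReal_mul hV0]
    exact ENNReal.ofReal_le_ofReal (key2 x hx)
  -- assemble
  have hexp : ((2:ℝ≥0∞)).toReal = (2:ℝ) := by simp
  calc eLpNorm (maxFn A f) 2 μΩ
      = (∫⁻ x, ((‖maxFn A f x‖₊:ℝ≥0∞))^(2:ℝ) ∂μΩ)^(1/2:ℝ) := by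
        rw [eLpNorm_eq_lintegral_rpow_enorm_toReal two_ne_zero ENNReal.ofNat_ne_top, hexp]
        rfl
    _ ≤ (∫⁻ x, (ENNReal.ofReal V * TT φ 0 N x)^(2:ℝ) ∂μΩ)^(1/2:ℝ) := by
        apply ENNReal.rpow_le_rpow _ (by norm_num)
        exact lintegral_mono_ae (hW.mono fun x hx => ENNReal.rpow_le_rpow hx (by norm_num))
    _ = (ENNReal.ofReal V ^(2:ℝ) * ∫⁻ x, (TT φ 0 N x)^(2:ℝ) ∂μΩ)^(1/2:ℝ) := by
        congr 1
        rw [← lintegral_const_mul' _ _ (ENNReal.rpow_ne_top_of_nonneg (by norm_num)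
          ENNReal.ofReal_ne_top)]
        apply lintegral_congr
        intro x
        rw [ENNReal.mul_rpow_of_nonneg _ _ (by norm_num)]
    _ = ENNReal.ofReal V * (∫⁻ x, (TT φ 0 N x)^(2:ℝ) ∂μΩ)^(1/2:ℝ) := by
        rw [ENNReal.mul_rpow_of_nonneg _ _ (by norm_num), ← ENNReal.rpow_mul]
        norm_num
    _ ≤ ENNReal.ofReal V * (2 * (∫⁻ x, (φ x)^(2:ℝ) ∂μΩ)^(1/2:ℝ)) :=
        mul_le_mul_right (doob φ hφm hfin hsupp N) _
    _ = ENNReal.ofReal (2*V) * (∫⁻ x, (φ x)^(2:ℝ) ∂μΩ)^(1/2:ℝ) := by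
        rw [ENNReal.ofReal_mul (by norm_num), ENNReal.ofReal_ofNat]
        ring
    _ = ENNReal.ofReal (2*V) * eLpNorm f 2 μΩ := by
        congr 1
        have heq : ∫⁻ x, (φ x)^(2:ℝ) ∂μΩ = ∫⁻ x, ((‖f x‖₊:ℝ≥0∞))^(2:ℝ) ∂μΩ := by
          apply lintegral_congr_ae
          filter_upwards [ae_restrict_mem measurableSet_Ico, hfg] with x hx hgx
          rw [hφ, Set.indicator_of_mem hx, hgx]
        rw [heq, eLpNorm_eq_lintegral_rpow_enorm_toReal two_ne_zero ENNReal.ofNat_ne_top, hexp]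
        rfl


end HLBV

/-- **Theorem.** There is an absolute constant `C` such that for every complex
`M × N` matrix `A`, `h_2(A) ≤ C · sup_{1≤j≤M} Σ_{k=0}^{N} |a_{jk} − a_{j,k+1}|`
(with `a_{j0} = a_{j,N+1} = 0`). -/
theorem h_le_bounded_variation :
    ∃ C : ℝ, 0 < C ∧
      ∀ (M N : ℕ) (A : Fin M → Fin N → ℂ),
        hStrong 2 A ≤
          ENNReal.ofReal
            (C * ⨆ j : Fin M, ∑ k ∈ Finset.range (N + 1), ‖aExt A j k - aExt A j (k + 1)‖) := by
  refine ⟨2, two_pos, fun M N A => ?_⟩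
  have h2 : ENNReal.ofReal (2:ℝ) = 2 := by
    rw [ENNReal.ofReal_ofNat]
  apply sInf_le
  intro f hf
  rw [h2] at hf ⊢
  exact HLBV.main_est A f hf
end
end

section
/- Let 0<θ<1/2. For every N∈ℕ there exists a complex 2^N×N matrix A=(a_{jk}) whose entries satisfy |a_{jk}| = N^{−θ} ≤ 2(log(2+|j−k|))^{−θ} for all 1≤j≤2^N, 1≤k≤N, and such that h_2(A) ≥ N^{1/2−θ}; that is, there exists f∈L_2(Ω) with ‖max_{1≤j≤2^N}|Σ_{k=1}^N a_{jk}Δ_k f|‖_{L_2(Ω)} ≥ N^{1/2−θ}‖f‖_{L_2(Ω)}. Consequently there is no finite constant C with h_2(A) ≤ C·max_{j,k}|a_{jk}|(log(2+|j−k|))^{θ} valid for all finite matrices A when 0<θ<1/2. -/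
open MeasureTheory
open scoped ENNReal NNReal

noncomputable section

namespace LogFail
open Set


/-- Rademacher-type function. -/
def rr (k : ℕ) (x : ℝ) : ℝ := (-1 : ℝ) ^ ⌊(2:ℝ) ^ k * x⌋

lemma rr_cases (k : ℕ) (x : ℝ) : rr k x = 1 ∨ rr k x = -1 := by
  rcases Int.even_or_odd ⌊(2:ℝ)^k * x⌋ with h | h
  · exact Or.inl h.neg_one_zpow
  · exact Or.inr h.neg_one_zpow

lemma rr_abs (k : ℕ) (x : ℝ) : |rr k x| ≤ 1 := by
  rcases rr_cases k x with h | h <;> rw [h] <;> norm_num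

lemma rr_sq (k : ℕ) (x : ℝ) : rr k x * rr k x = 1 := by
  rcases rr_cases k x with h | h <;> rw [h] <;> norm_num

lemma measurable_rr (k : ℕ) : Measurable (rr k) := by
  have h1 : Measurable fun x : ℝ => ⌊(2:ℝ)^k * x⌋ := (measurable_const.mul measurable_id).floor
  exact measurable_from_top.comp h1

lemma integrableOn_bdd {g : ℝ → ℝ} (hg : Measurable g) (C : ℝ) (hb : ∀ x, |g x| ≤ C)
    {s : Set ℝ} (hs : volume s ≠ ∞) : IntegrableOn g s := by
  refine Integrable.mono' (g := fun _ => C)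
    (integrableOn_const hs) hg.aestronglyMeasurable.restrict ?_
  exact Filter.Eventually.of_forall fun x => by simpa [Real.norm_eq_abs] using hb x

lemma intervalIntegrable_bdd {g : ℝ → ℝ} (hg : Measurable g) (C : ℝ) (hb : ∀ x, |g x| ≤ C)
    (a b : ℝ) : IntervalIntegrable g volume a b := by
  constructor <;>
    exact integrableOn_bdd hg C hb (by rw [Real.volume_Ioc]; exact ENNReal.ofReal_ne_top)

lemma integral_Ico_eq_intervalIntegral (g : ℝ → ℝ) {a b : ℝ} (h : a ≤ b) :
    ∫ x in Ico a b, g x = ∫ x in a..b, g x := by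
  rw [intervalIntegral.integral_of_le h, integral_Ioc_eq_integral_Ioo,
    integral_Ico_eq_integral_Ioo]

lemma integral_Ico_const {g : ℝ → ℝ} {a b c : ℝ} (hab : a ≤ b) (h : ∀ x ∈ Ico a b, g x = c) :
    ∫ x in Ico a b, g x = (b - a) * c := by
  rw [setIntegral_congr_fun measurableSet_Ico h, setIntegral_const, measureReal_def, Real.volume_Ico,
    ENNReal.toReal_ofReal (by linarith), smul_eq_mul]

lemma floor_dyadic {k m : ℕ} (hkm : k ≤ m) (i : ℤ) {x : ℝ}
    (h1 : (i:ℝ)/2^m ≤ x) (h2 : x < ((i:ℝ)+1)/2^m) :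
    ⌊(2:ℝ)^k * x⌋ = ⌊(i:ℝ)/2^(m-k)⌋ := by
  have h2k : (0:ℝ) < 2^k := by positivity
  have h2d : (0:ℝ) < 2^(m-k) := by positivity
  have hmk : (2:ℝ)^m = 2^k * 2^(m-k) := by rw [← pow_add]; congr 1; omega
  set n := ⌊(i:ℝ)/2^(m-k)⌋ with hn
  have hfl : (n:ℝ) ≤ (i:ℝ)/2^(m-k) := Int.floor_le _
  have hfl2 : (i:ℝ)/2^(m-k) < (n:ℝ) + 1 := Int.lt_floor_add_one _
  have hni : (i:ℝ) < ((n:ℝ)+1) * 2^(m-k) := by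
    calc (i:ℝ) = (i:ℝ)/2^(m-k) * 2^(m-k) := by field_simp
    _ < ((n:ℝ)+1) * 2^(m-k) := mul_lt_mul_of_pos_right hfl2 h2d
  have hZ : i < (n + 1) * (2:ℤ)^(m-k) := by
    have : (i:ℝ) < (((n + 1) * (2:ℤ)^(m-k) : ℤ) : ℝ) := by push_cast; linarith
    exact_mod_cast this
  have hZ' : (i:ℝ) + 1 ≤ ((n:ℝ) + 1) * 2^(m-k) := by
    have : ((i + 1 : ℤ) : ℝ) ≤ (((n + 1) * (2:ℤ)^(m-k) : ℤ) : ℝ) := by exact_mod_cast hZ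
    push_cast at this; linarith
  have e1 : (2:ℝ)^k * ((i:ℝ)/2^m) = (i:ℝ)/2^(m-k) := by
    rw [hmk]; field_simp
  have e2 : (2:ℝ)^k * (((i:ℝ)+1)/2^m) = ((i:ℝ)+1)/2^(m-k) := by
    rw [hmk]; field_simp
  rw [Int.floor_eq_iff]
  constructor
  · calc (n:ℝ) ≤ (i:ℝ)/2^(m-k) := hfl
      _ = 2^k * ((i:ℝ)/2^m) := e1.symm
      _ ≤ 2^k * x := mul_le_mul_of_nonneg_left h1 h2k.le
  · calc (2:ℝ)^k * x < 2^k * (((i:ℝ)+1)/2^m) := mul_lt_mul_of_pos_left h2 h2k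
      _ = ((i:ℝ)+1)/2^(m-k) := e2
      _ ≤ (n:ℝ) + 1 := by rw [div_le_iff₀ h2d]; linarith

lemma rr_eq_on {k m : ℕ} (hkm : k ≤ m) (i : ℤ) {x y : ℝ}
    (hx : x ∈ Ico ((i:ℝ)/2^m) (((i:ℝ)+1)/2^m))
    (hy : y ∈ Ico ((i:ℝ)/2^m) (((i:ℝ)+1)/2^m)) : rr k x = rr k y := by
  unfold rr
  rw [floor_dyadic hkm i hx.1 hx.2, floor_dyadic hkm i hy.1 hy.2]


lemma rr_on_half_left (k : ℕ) (i : ℤ) {x : ℝ}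
    (hx : x ∈ Ico (((2*i:ℤ):ℝ)/2^(k+1)) ((((2*i:ℤ):ℝ)+1)/2^(k+1))) : rr (k+1) x = 1 := by
  unfold rr
  rw [floor_dyadic (le_refl (k+1)) (2*i) hx.1 hx.2]
  simp only [Nat.sub_self, pow_zero, div_one, Int.floor_intCast]
  exact Even.neg_one_zpow ⟨i, by ring⟩

lemma rr_on_half_right (k : ℕ) (i : ℤ) {x : ℝ}
    (hx : x ∈ Ico (((2*i+1:ℤ):ℝ)/2^(k+1)) ((((2*i+1:ℤ):ℝ)+1)/2^(k+1))) : rr (k+1) x = -1 := by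
  unfold rr
  rw [floor_dyadic (le_refl (k+1)) (2*i+1) hx.1 hx.2]
  simp only [Nat.sub_self, pow_zero, div_one, Int.floor_intCast]
  exact Odd.neg_one_zpow ⟨i, by ring⟩

/-- The integral of `rr (k+1)` over a dyadic interval of generation `k` vanishes. -/
lemma integral_rr_half (k : ℕ) (i : ℤ) :
    ∫ x in Ico ((i:ℝ)/2^k) (((i:ℝ)+1)/2^k), rr (k+1) x = 0 := by
  have h2 : (0:ℝ) < 2^(k+1) := by positivity
  set a : ℝ := ((2*i:ℤ):ℝ)/2^(k+1) with hadef
  set m0 : ℝ := ((2*i+1:ℤ):ℝ)/2^(k+1) with hmdef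
  set b : ℝ := ((2*i+2:ℤ):ℝ)/2^(k+1) with hbdef
  have ham : a ≤ m0 := by rw [hadef, hmdef]; push_cast; gcongr <;> linarith
  have hmb : m0 ≤ b := by rw [hmdef, hbdef]; push_cast; gcongr <;> linarith
  have hIa : (i:ℝ)/2^k = a := by rw [hadef]; push_cast; rw [pow_succ]; field_simp
  have hIb : ((i:ℝ)+1)/2^k = b := by rw [hbdef]; push_cast; rw [pow_succ]; field_simp
  have hsplit : Ico a b = Ico a m0 ∪ Ico m0 b := (Ico_union_Ico_eq_Ico ham hmb).symm
  have hint1 : IntegrableOn (rr (k+1)) (Ico a m0) volume :=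
    integrableOn_bdd (measurable_rr _) 1 (rr_abs _) (by rw [Real.volume_Ico]; exact ENNReal.ofReal_ne_top)
  have hint2 : IntegrableOn (rr (k+1)) (Ico m0 b) volume :=
    integrableOn_bdd (measurable_rr _) 1 (rr_abs _) (by rw [Real.volume_Ico]; exact ENNReal.ofReal_ne_top)
  rw [hIa, hIb, hsplit, setIntegral_union (Ico_disjoint_Ico_same)
    measurableSet_Ico hint1 hint2]
  have e1 : ∫ x in Ico a m0, rr (k+1) x = (m0 - a) * 1 := by
    refine integral_Ico_const ham fun x hx => rr_on_half_left k i ?_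
    constructor
    · exact hx.1
    · refine lt_of_lt_of_le hx.2 (le_of_eq ?_)
      rw [hmdef]; push_cast; ring
  have e2 : ∫ x in Ico m0 b, rr (k+1) x = (b - m0) * (-1) := by
    refine integral_Ico_const hmb fun x hx => rr_on_half_right k i ?_
    constructor
    · exact hx.1
    · refine lt_of_lt_of_le hx.2 (le_of_eq ?_)
      rw [hbdef]; push_cast; ring
  rw [e1, e2, hadef, hmdef, hbdef]
  push_cast
  field_simp
  ring

/-- The integral of `rr (k+1)` vanishes over coarser dyadic intervals. -/
lemma integral_rr_zero {k m : ℕ} (hmk : m ≤ k) (i : ℤ) :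
    ∫ x in Ico ((i:ℝ)/2^m) (((i:ℝ)+1)/2^m), rr (k+1) x = 0 := by
  set n : ℕ := 2^(k-m) with hndef
  set a : ℕ → ℝ := fun t => ((i * (2:ℤ)^(k-m) + (t:ℤ) : ℤ):ℝ)/2^k with hadef
  have hmono : ∀ t : ℕ, a t ≤ a (t+1) := by
    intro t; rw [hadef]; push_cast; gcongr <;> linarith
  have hII : ∀ t : ℕ, IntervalIntegrable (rr (k+1)) volume (a t) (a (t+1)) := fun t =>
    intervalIntegrable_bdd (measurable_rr _) 1 (rr_abs _) _ _
  have hsum := intervalIntegral.sum_integral_adjacent_intervals (a := a) (μ := volume)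
    (f := rr (k+1)) (n := n) (fun t _ => hII t)
  have hpiece : ∀ t : ℕ, ∫ x in (a t)..(a (t+1)), rr (k+1) x = 0 := by
    intro t
    have h1 : a t = ((i * (2:ℤ)^(k-m) + (t:ℤ) : ℤ):ℝ)/2^k := rfl
    have h2 : a (t+1) = (((i * (2:ℤ)^(k-m) + (t:ℤ) : ℤ):ℝ)+1)/2^k := by
      rw [hadef]; push_cast; ring_nf
    rw [← integral_Ico_eq_intervalIntegral _ (hmono t), h1, h2, integral_rr_half]
  rw [Finset.sum_congr rfl (fun t _ => hpiece t)] at hsum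
  have h2km : (2:ℝ)^k = 2^m * 2^(k-m) := by rw [← pow_add]; congr 1; omega
  have ha0 : a 0 = (i:ℝ)/2^m := by
    rw [hadef]; push_cast; rw [h2km]; field_simp; ring
  have han : a n = ((i:ℝ)+1)/2^m := by
    rw [hadef, hndef]; push_cast; rw [h2km]; field_simp
  have hle : (i:ℝ)/2^m ≤ ((i:ℝ)+1)/2^m := by gcongr <;> linarith
  rw [ha0, han] at hsum
  rw [integral_Ico_eq_intervalIntegral _ hle, ← hsum]
  simp


lemma integrableOn_rr_mul (p q : ℕ) {s : Set ℝ} (hs : volume s ≠ ∞) :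
    IntegrableOn (fun x => rr p x * rr q x) s :=
  integrableOn_bdd ((measurable_rr p).mul (measurable_rr q)) 1
    (fun x => by rw [Pi.mul_apply, abs_mul]
                 exact mul_le_one₀ (rr_abs p x) (abs_nonneg _) (rr_abs q x)) hs

/-- Orthogonality of distinct Rademacher functions. -/
lemma integral_rr_mul_lt (p q : ℕ) (hpq : p < q) :
    ∫ x in Ico (0:ℝ) 1, rr (p+1) x * rr (q+1) x = 0 := by
  set a : ℕ → ℝ := fun t => ((t:ℤ):ℝ)/2^q with hadef
  have hmono : ∀ t : ℕ, a t ≤ a (t+1) := by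
    intro t; rw [hadef]; push_cast; gcongr <;> linarith
  have hII : ∀ t : ℕ, IntervalIntegrable (fun x => rr (p+1) x * rr (q+1) x) volume (a t) (a (t+1)) :=
    fun t => intervalIntegrable_bdd ((measurable_rr _).mul (measurable_rr _)) 1
      (fun x => by rw [Pi.mul_apply, abs_mul]
                   exact mul_le_one₀ (rr_abs _ x) (abs_nonneg _) (rr_abs _ x)) _ _
  have hsum := intervalIntegral.sum_integral_adjacent_intervals (a := a) (μ := volume)
    (f := fun x => rr (p+1) x * rr (q+1) x) (n := 2^q) (fun t _ => hII t)
  have hpiece : ∀ t : ℕ, ∫ x in (a t)..(a (t+1)), rr (p+1) x * rr (q+1) x = 0 := by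
    intro t
    have h2 : a (t+1) = (((t:ℤ):ℝ)+1)/2^q := by rw [hadef]; push_cast; ring_nf
    rw [← integral_Ico_eq_intervalIntegral _ (hmono t)]
    have hleft : a t ∈ Ico (((t:ℤ):ℝ)/2^q) ((((t:ℤ):ℝ)+1)/2^q) := by
      constructor
      · exact le_of_eq rfl
      · rw [hadef]; push_cast; gcongr <;> linarith
    set c : ℝ := rr (p+1) (a t) with hcdef
    have hcongr : ∀ x ∈ Ico (a t) (a (t+1)), rr (p+1) x * rr (q+1) x = c * rr (q+1) x := by
      intro x hx
      have hx' : x ∈ Ico (((t:ℤ):ℝ)/2^q) ((((t:ℤ):ℝ)+1)/2^q) :=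
        ⟨hx.1, lt_of_lt_of_le hx.2 (le_of_eq h2)⟩
      congr 1
      exact rr_eq_on (by omega) (t:ℤ) hx' hleft
    rw [setIntegral_congr_fun measurableSet_Ico hcongr, integral_const_mul, h2]
    have := integral_rr_half q (t:ℤ)
    rw [this, mul_zero]
  rw [Finset.sum_congr rfl (fun t _ => hpiece t)] at hsum
  have ha0 : a 0 = 0 := by rw [hadef]; norm_num
  have han : a (2^q) = 1 := by rw [hadef]; push_cast; field_simp
  rw [ha0, han] at hsum
  rw [integral_Ico_eq_intervalIntegral _ (by norm_num : (0:ℝ) ≤ 1), ← hsum]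
  simp

lemma integral_rr_orth (p q : ℕ) :
    ∫ x in Ico (0:ℝ) 1, rr (p+1) x * rr (q+1) x = if p = q then (1:ℝ) else 0 := by
  rcases lt_trichotomy p q with h | h | h
  · rw [if_neg h.ne, integral_rr_mul_lt p q h]
  · subst h
    rw [if_pos rfl, integral_Ico_const (by norm_num) (fun x _ => rr_sq (p+1) x)]
    norm_num
  · rw [if_neg h.ne']
    have : ∀ x : ℝ, rr (p+1) x * rr (q+1) x = rr (q+1) x * rr (p+1) x := fun x => mul_comm _ _
    simp_rw [this]
    exact integral_rr_mul_lt q p h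

/-- The real-valued test function. -/
def fr (N : ℕ) (x : ℝ) : ℝ := ∑ k ∈ Finset.range N, rr (k+1) x

lemma measurable_fr (N : ℕ) : Measurable (fr N) :=
  Finset.measurable_sum _ (fun k _ => measurable_rr (k+1))

lemma fr_abs (N : ℕ) (x : ℝ) : |fr N x| ≤ N := by
  calc |fr N x| ≤ ∑ k ∈ Finset.range N, |rr (k+1) x| := Finset.abs_sum_le_sum_abs _ _
  _ ≤ ∑ k ∈ Finset.range N, 1 := Finset.sum_le_sum (fun k _ => rr_abs (k+1) x)
  _ = N := by simp

lemma integral_fr_sq (N : ℕ) : ∫ x in Ico (0:ℝ) 1, (fr N x)^2 = N := by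
  have hfin : volume (Ico (0:ℝ) 1) ≠ ∞ := by rw [Real.volume_Ico]; exact ENNReal.ofReal_ne_top
  have hexp : ∀ x : ℝ, (fr N x)^2 =
      ∑ p ∈ Finset.range N, ∑ q ∈ Finset.range N, rr (p+1) x * rr (q+1) x := by
    intro x; rw [sq, fr, Finset.sum_mul_sum]
  simp_rw [hexp]
  rw [integral_finset_sum _ (fun p _ => integrable_finset_sum _
    (fun q _ => integrableOn_rr_mul (p+1) (q+1) hfin))]
  have hrow : ∀ p ∈ Finset.range N,
      (∫ x in Ico (0:ℝ) 1, ∑ q ∈ Finset.range N, rr (p+1) x * rr (q+1) x) = 1 := by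
    intro p hp
    rw [integral_finset_sum _ (fun q _ => integrableOn_rr_mul (p+1) (q+1) hfin),
      Finset.sum_congr rfl (fun q _ => integral_rr_orth p q), Finset.sum_ite_eq]
    exact if_pos hp
  rw [Finset.sum_congr rfl hrow]
  simp



def fC (N : ℕ) (x : ℝ) : ℂ := ((fr N x : ℝ) : ℂ)

lemma condE_fC (N m : ℕ) {x : ℝ} (hx : x ∈ Ico (0:ℝ) 1) :
    condE m (fC N) x = ((∑ k ∈ Finset.range (min m N), rr (k+1) x : ℝ) : ℂ) := by
  have h2m : (0:ℝ) < 2^m := by positivity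
  unfold condE
  set i : ℤ := ⌊(2:ℝ)^m * x⌋ with hidef
  have hfl : (i:ℝ) ≤ (2:ℝ)^m * x := Int.floor_le _
  have hfl2 : (2:ℝ)^m * x < (i:ℝ) + 1 := Int.lt_floor_add_one _
  have hxI : x ∈ Ico ((i:ℝ)/2^m) (((i:ℝ)+1)/2^m) := by
    constructor
    · rw [div_le_iff₀ h2m]; linarith
    · rw [lt_div_iff₀ h2m]; linarith
  have hIfin : volume (Ico ((i:ℝ)/2^m) (((i:ℝ)+1)/2^m)) ≠ ∞ := by
    rw [Real.volume_Ico]; exact ENNReal.ofReal_ne_top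
  have hIlen : ((i:ℝ)+1)/2^m - (i:ℝ)/2^m = 1/2^m := by field_simp; ring
  have hab : (i:ℝ)/2^m ≤ ((i:ℝ)+1)/2^m := by gcongr <;> linarith
  have hterm : ∀ k ∈ Finset.range N,
      (∫ t in Ico ((i:ℝ)/2^m) (((i:ℝ)+1)/2^m), rr (k+1) t)
        = if k < m then (1/2^m) * rr (k+1) x else 0 := by
    intro k _
    by_cases hkm : k < m
    · rw [if_pos hkm, integral_Ico_const hab (fun t ht => rr_eq_on (by omega) i ht hxI), hIlen]
    · rw [if_neg hkm]
      exact integral_rr_zero (by omega) i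
  have hsum : (∫ t in Ico ((i:ℝ)/2^m) (((i:ℝ)+1)/2^m), fr N t)
      = ∑ k ∈ Finset.range N, if k < m then (1/2^m) * rr (k+1) x else 0 := by
    rw [show (fun t => fr N t) = fun t => ∑ k ∈ Finset.range N, rr (k+1) t from rfl,
      integral_finset_sum _ (fun k _ =>
        integrableOn_bdd (measurable_rr (k+1)) 1 (rr_abs (k+1)) hIfin)]
    exact Finset.sum_congr rfl hterm
  have hfilter : (∑ k ∈ Finset.range N, if k < m then (1/2^m) * rr (k+1) x else 0)
      = (1/2^m) * ∑ k ∈ Finset.range (min m N), rr (k+1) x := by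
    have hf : Finset.filter (fun k => k < m) (Finset.range N) = Finset.range (min m N) := by
      ext k; simp [Nat.lt_min, and_comm]
    rw [← Finset.sum_filter, hf, Finset.mul_sum]
  simp only [fC]
  have hJ : (∫ t in Ico ((i:ℝ)/2^m) (((i:ℝ)+1)/2^m), ((fr N t : ℝ):ℂ))
      = (((1/2^m) * ∑ k ∈ Finset.range (min m N), rr (k+1) x : ℝ) : ℂ) := by
    calc (∫ t in Ico ((i:ℝ)/2^m) (((i:ℝ)+1)/2^m), ((fr N t : ℝ):ℂ))
        = ((∫ t in Ico ((i:ℝ)/2^m) (((i:ℝ)+1)/2^m), fr N t : ℝ) : ℂ) := integral_ofReal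
      _ = _ := by rw [hsum, hfilter]
  rw [hJ]
  push_cast
  field_simp

lemma mdiff_fC (N k : ℕ) (hk : k < N) {x : ℝ} (hx : x ∈ Ico (0:ℝ) 1) :
    mdiff (k+1) (fC N) x = ((rr (k+1) x : ℝ) : ℂ) := by
  unfold mdiff
  rw [show k+1-1 = k from rfl, condE_fC N (k+1) hx, condE_fC N k hx,
    min_eq_left (by omega : k+1 ≤ N), min_eq_left (by omega : k ≤ N),
    Finset.sum_range_succ]
  push_cast
  ring


instance : IsProbabilityMeasure μΩ := by
  constructor
  rw [μΩ, Measure.restrict_apply_univ, Real.volume_Ico]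
  norm_num

lemma memLp_fC (N : ℕ) : MemLp (fC N) 2 μΩ := by
  have hb : ∀ x, ‖fC N x‖ ≤ N := fun x => by
    rw [fC, Complex.norm_real, Real.norm_eq_abs]; exact fr_abs N x
  have hm : AEStronglyMeasurable (fC N) μΩ :=
    (Complex.measurable_ofReal.comp (measurable_fr N)).aestronglyMeasurable
  exact (memLp_top_of_bound hm N (Filter.Eventually.of_forall hb)).mono_exponent le_top

lemma eLpNorm_fC (N : ℕ) : eLpNorm (fC N) 2 μΩ = ENNReal.ofReal ((N:ℝ) ^ ((1:ℝ)/2)) := by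
  rw [eLpNorm_eq_lintegral_rpow_enorm_toReal (by norm_num) (by norm_num)]
  have htoReal : ((2:ℝ≥0∞)).toReal = 2 := by norm_num
  rw [htoReal]
  have hpt : ∀ x : ℝ, ‖fC N x‖ₑ ^ (2:ℝ) = ENNReal.ofReal ((fr N x)^2) := by
    intro x
    rw [show fC N x = ((fr N x : ℝ) : ℂ) from rfl]
    rw [show ‖((fr N x : ℝ):ℂ)‖ₑ = ENNReal.ofReal |fr N x| from ?_]
    · rw [ENNReal.ofReal_rpow_of_nonneg (abs_nonneg _) (by norm_num), Real.rpow_two, sq_abs]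
    · rw [← Real.enorm_eq_ofReal_abs]
      rw [← ofReal_norm, ← ofReal_norm, Complex.norm_real]
  have hint : Integrable (fun x => (fr N x)^2) μΩ := by
    have : IntegrableOn (fun x => (fr N x)^2) (Set.Ico (0:ℝ) 1) volume := by
      refine integrableOn_bdd ((measurable_fr N).pow_const 2) ((N:ℝ)^2) (fun x => ?_)
        (by rw [Real.volume_Ico]; exact ENNReal.ofReal_ne_top)
      rw [abs_pow]
      exact pow_le_pow_left₀ (abs_nonneg _) (fr_abs N x) 2
    exact this
  have hlin : (∫⁻ x, ‖fC N x‖ₑ ^ (2:ℝ) ∂μΩ) = ENNReal.ofReal ((N:ℝ)) := by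
    simp_rw [hpt]
    rw [← ofReal_integral_eq_lintegral_ofReal hint
      (Filter.Eventually.of_forall fun x => sq_nonneg _)]
    congr 1
    exact integral_fr_sq N
  rw [hlin, ENNReal.ofReal_rpow_of_nonneg (Nat.cast_nonneg N) (by norm_num)]

def sg : Fin 2 → ℝ := fun b => if b = 0 then 1 else -1

def matA (θ : ℝ) (N : ℕ) : Fin (2^N) → Fin N → ℂ :=
  fun j k => (((N:ℝ)^(-θ) * sg (finFunctionFinEquiv.symm j k) : ℝ) : ℂ)

lemma sg_abs (b : Fin 2) : |sg b| = 1 := by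
  fin_cases b <;> simp [sg]

lemma norm_matA (θ : ℝ) (N : ℕ) (j : Fin (2^N)) (k : Fin N) :
    ‖matA θ N j k‖ = (N:ℝ)^(-θ) := by
  rw [show matA θ N j k = (((N:ℝ)^(-θ) * sg (finFunctionFinEquiv.symm j k) : ℝ):ℂ) from rfl,
    Complex.norm_real, Real.norm_eq_abs, abs_mul, sg_abs, mul_one,
    abs_of_nonneg (Real.rpow_nonneg (Nat.cast_nonneg N) _)]

lemma logb_bounds (N : ℕ) (hN : 1 ≤ N) (j : Fin (2^N)) (k : Fin N) :
    1 ≤ Real.logb 2 (2 + (((j:ℤ) - (k:ℤ)).natAbs : ℝ)) ∧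
      Real.logb 2 (2 + (((j:ℤ) - (k:ℤ)).natAbs : ℝ)) ≤ 2*(N:ℝ) := by
  have hN1 : (1:ℝ) ≤ N := by exact_mod_cast hN
  set d : ℝ := ((((j:ℤ) - (k:ℤ)).natAbs : ℕ) : ℝ) with hd
  have hd0 : 0 ≤ d := Nat.cast_nonneg _
  constructor
  · rw [← Real.logb_self_eq_one (by norm_num : (1:ℝ) < 2)]
    exact Real.logb_le_logb_of_le one_lt_two (by norm_num) (by linarith)
  · have hdlt : (((j:ℤ) - (k:ℤ)).natAbs) < 2^N := by
      have hj := j.isLt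
      have hk := k.isLt
      have hNN : N < 2^N := Nat.lt_two_pow_self
      omega
    have hdR : d ≤ (2:ℝ)^N - 1 := by
      have h1 : (((j:ℤ) - (k:ℤ)).natAbs : ℕ) ≤ 2^N - 1 := by omega
      have h2 : (((2^N - 1 : ℕ)):ℝ) = (2:ℝ)^N - 1 := by
        have : (1:ℕ) ≤ 2^N := Nat.one_le_two_pow
        push_cast [this]
        ring
      rw [hd, ← h2]
      exact_mod_cast h1
    have h2N1 : (1:ℝ) ≤ (2:ℝ)^N := by
      have : (1:ℕ) ≤ 2^N := Nat.one_le_two_pow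
      exact_mod_cast this
    have h2d : 2 + d ≤ (2:ℝ)^(N+1) := by
      rw [pow_succ]
      nlinarith
    have hlog := Real.logb_le_logb_of_le one_lt_two (by linarith : (0:ℝ) < 2 + d) h2d
    have hlogval : Real.logb 2 ((2:ℝ)^(N+1)) = (N:ℝ)+1 := by
      rw [show ((2:ℝ)^(N+1)) = (2:ℝ)^(((N+1:ℕ)):ℝ) from (Real.rpow_natCast 2 (N+1)).symm,
        Real.logb_rpow (by norm_num) (by norm_num)]
      push_cast
      ring
    rw [hlogval] at hlog
    linarith

lemma matA_log_le (θ : ℝ) (hθ0 : 0 < θ) (hθ : θ < 1/2) (N : ℕ) (hN : 1 ≤ N)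
    (j : Fin (2^N)) (k : Fin N) :
    ‖matA θ N j k‖ ≤ 2 * Real.logb 2 (2 + (((j:ℤ) - (k:ℤ)).natAbs : ℝ)) ^ (-θ) := by
  rw [norm_matA]
  have hNpos : (0:ℝ) < N := by exact_mod_cast hN
  have hN1 : (1:ℝ) ≤ N := by exact_mod_cast hN
  obtain ⟨hL1, hL2N⟩ := logb_bounds N hN j k
  set L : ℝ := Real.logb 2 (2 + (((j:ℤ) - (k:ℤ)).natAbs : ℝ))
  have h1 : (2*(N:ℝ))^(-θ) ≤ L^(-θ) :=
    Real.rpow_le_rpow_of_nonpos (by linarith) hL2N (by linarith)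
  have h2 : (2*(N:ℝ))^(-θ) = 2^(-θ) * (N:ℝ)^(-θ) :=
    Real.mul_rpow (by norm_num) (Nat.cast_nonneg N)
  have h3 : (1/2 : ℝ) ≤ 2^(-θ) := by
    rw [show (1/2:ℝ) = 2^(-1:ℝ) from by rw [Real.rpow_neg_one]; norm_num]
    exact Real.rpow_le_rpow_of_exponent_le (by norm_num) (by linarith)
  have h4 : (0:ℝ) ≤ (N:ℝ)^(-θ) := Real.rpow_nonneg (Nat.cast_nonneg N) _
  have h5 := mul_le_mul_of_nonneg_right h3 h4
  calc (N:ℝ)^(-θ) = 2 * ((1/2) * (N:ℝ)^(-θ)) := by ring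
  _ ≤ 2 * (2^(-θ) * (N:ℝ)^(-θ)) := by linarith
  _ = 2 * (2*(N:ℝ))^(-θ) := by rw [h2]
  _ ≤ 2 * L^(-θ) := by linarith

lemma maxFn_matA_ge (θ : ℝ) (N : ℕ) (hN : 1 ≤ N) {x : ℝ} (hx : x ∈ Ico (0:ℝ) 1) :
    (N:ℝ)^((1:ℝ)-θ) ≤ maxFn (matA θ N) (fC N) x := by
  have hNpos : (0:ℝ) < N := by exact_mod_cast hN
  set p : Fin N → Fin 2 := fun k => if rr (k.val+1) x = 1 then 0 else 1 with hpdef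
  have hsg_p : ∀ k : Fin N, sg (p k) = rr (k.val+1) x := by
    intro k
    by_cases h : rr (k.val+1) x = 1
    · simp [hpdef, sg, h]
    · have h' : rr (k.val+1) x = -1 := (rr_cases _ x).resolve_left h
      simp only [hpdef, sg, h, h', if_false]
      norm_num
  have hterm : ∀ k : Fin N,
      matA θ N (finFunctionFinEquiv p) k * mdiff (k.val + 1) (fC N) x
        = (((N:ℝ)^(-θ) : ℝ):ℂ) := by
    intro k
    rw [mdiff_fC N k.val k.isLt hx]
    have hA : matA θ N (finFunctionFinEquiv p) k
        = (((N:ℝ)^(-θ) * sg (p k) : ℝ):ℂ) := by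
      rw [show matA θ N (finFunctionFinEquiv p) k
        = (((N:ℝ)^(-θ) * sg (finFunctionFinEquiv.symm (finFunctionFinEquiv p) k) : ℝ):ℂ)
        from rfl, Equiv.symm_apply_apply]
    rw [hA, hsg_p, ← Complex.ofReal_mul]
    congr 1
    rw [mul_assoc, rr_sq, mul_one]
  have hval : (∑ k : Fin N, matA θ N (finFunctionFinEquiv p) k * mdiff (k.val + 1) (fC N) x)
      = (((N:ℝ) * (N:ℝ)^(-θ) : ℝ) : ℂ) := by
    rw [Finset.sum_congr rfl (fun k _ => hterm k), Finset.sum_const, Finset.card_univ,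
      Fintype.card_fin, nsmul_eq_mul]
    push_cast
    ring
  have hNN : (N:ℝ) * (N:ℝ)^(-θ) = (N:ℝ)^((1:ℝ)-θ) := by
    rw [show ((1:ℝ)-θ) = 1 + (-θ) from by ring, Real.rpow_add hNpos, Real.rpow_one]
  have hnormval : ‖∑ k : Fin N, matA θ N (finFunctionFinEquiv p) k * mdiff (k.val + 1) (fC N) x‖
      = (N:ℝ)^((1:ℝ)-θ) := by
    rw [hval, Complex.norm_real, Real.norm_eq_abs,
      abs_of_nonneg (by positivity), hNN]
  calc ((N:ℝ)^((1:ℝ)-θ))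
      = ‖∑ k : Fin N, matA θ N (finFunctionFinEquiv p) k * mdiff (k.val + 1) (fC N) x‖ :=
        hnormval.symm
  _ ≤ maxFn (matA θ N) (fC N) x :=
      le_ciSup (f := fun j => ‖∑ k : Fin N, matA θ N j k * mdiff (k.val + 1) (fC N) x‖)
        (Set.Finite.bddAbove (Set.finite_range _)) (finFunctionFinEquiv p)

end LogFail


open LogFail

/-- **Theorem.** For `0 < θ < 1/2` the logarithmic condition
`|a_{jk}| ≤ 2(log(2+|j−k|))^{−θ}` does not bound `h_2(A)`:  for every `N ≥ 1` there is a
`2^N × N` matrix `A` with `|a_{jk}| = N^{−θ} ≤ 2(log(2+|j−k|))^{−θ}` and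
`h_2(A) ≥ N^{1/2−θ}`, witnessed by a nonzero `f ∈ L_2(Ω)` with
`‖max_j |Σ_k a_{jk}Δ_k f|‖_{L_2} ≥ N^{1/2−θ}‖f‖_{L_2}`.  Consequently no finite constant
`C` satisfies `h_2(A) ≤ C·max_{j,k}|a_{jk}|(log(2+|j−k|))^{θ}` for all finite matrices. -/
theorem log_condition_fails_below_half (θ : ℝ) (hθ0 : 0 < θ) (hθ : θ < 1 / 2) :
    (∀ N : ℕ, 1 ≤ N →
      ∃ A : Fin (2 ^ N) → Fin N → ℂ,
        (∀ j k, ‖A j k‖ = (N : ℝ) ^ (-θ)) ∧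
        (∀ (j : Fin (2 ^ N)) (k : Fin N),
          ‖A j k‖ ≤ 2 * Real.logb 2 (2 + (((j : ℤ) - (k : ℤ)).natAbs : ℝ)) ^ (-θ)) ∧
        ENNReal.ofReal ((N : ℝ) ^ ((1 : ℝ) / 2 - θ)) ≤ hStrong 2 A ∧
        ∃ f : ℝ → ℂ, MemLp f 2 μΩ ∧ eLpNorm f 2 μΩ ≠ 0 ∧
          ENNReal.ofReal ((N : ℝ) ^ ((1 : ℝ) / 2 - θ)) * eLpNorm f 2 μΩ ≤
            eLpNorm (maxFn A f) 2 μΩ) ∧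
    ¬ ∃ C : ℝ, ∀ (M N : ℕ) (A : Fin M → Fin N → ℂ),
        hStrong 2 A ≤
          ENNReal.ofReal
            (C * ⨆ j : Fin M, ⨆ k : Fin N,
              ‖A j k‖ * Real.logb 2 (2 + (((j : ℤ) - (k : ℤ)).natAbs : ℝ)) ^ θ) := by
  have hof2 : ENNReal.ofReal (2:ℝ) = (2:ℝ≥0∞) := by norm_num
  have hμ0 : μΩ ≠ 0 := by
    intro h
    have h1 : μΩ Set.univ = 1 := measure_univ
    rw [h] at h1
    simp at h1
  have part1 : ∀ N : ℕ, 1 ≤ N →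
      ∃ A : Fin (2 ^ N) → Fin N → ℂ,
        (∀ j k, ‖A j k‖ = (N : ℝ) ^ (-θ)) ∧
        (∀ (j : Fin (2 ^ N)) (k : Fin N),
          ‖A j k‖ ≤ 2 * Real.logb 2 (2 + (((j : ℤ) - (k : ℤ)).natAbs : ℝ)) ^ (-θ)) ∧
        ENNReal.ofReal ((N : ℝ) ^ ((1 : ℝ) / 2 - θ)) ≤ hStrong 2 A ∧
        ∃ f : ℝ → ℂ, MemLp f 2 μΩ ∧ eLpNorm f 2 μΩ ≠ 0 ∧
          ENNReal.ofReal ((N : ℝ) ^ ((1 : ℝ) / 2 - θ)) * eLpNorm f 2 μΩ ≤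
            eLpNorm (maxFn A f) 2 μΩ := by
    intro N hN
    have hNpos : (0:ℝ) < N := by exact_mod_cast hN
    -- the L² norm of f
    have hLp : eLpNorm (fC N) 2 μΩ = ENNReal.ofReal ((N:ℝ)^((1:ℝ)/2)) := eLpNorm_fC N
    have hLpne0 : eLpNorm (fC N) 2 μΩ ≠ 0 := by
      rw [hLp, ne_eq, ENNReal.ofReal_eq_zero, not_le]
      positivity
    have hLpfin : eLpNorm (fC N) 2 μΩ ≠ ∞ := by
      rw [hLp]; exact ENNReal.ofReal_ne_top
    -- lower bound for the maximal function
    have hmaxlb : ENNReal.ofReal ((N:ℝ)^((1:ℝ)-θ)) ≤ eLpNorm (maxFn (matA θ N) (fC N)) 2 μΩ := by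
      have hae : ∀ᵐ x ∂μΩ, ‖((N:ℝ)^((1:ℝ)-θ) : ℝ)‖ ≤ maxFn (matA θ N) (fC N) x := by
        refine Filter.eventually_of_mem (self_mem_ae_restrict measurableSet_Ico) ?_
        intro x hx
        rw [Real.norm_eq_abs, abs_of_nonneg (by positivity)]
        exact maxFn_matA_ge θ N hN hx
      have hconst : eLpNorm (fun _ : ℝ => ((N:ℝ)^((1:ℝ)-θ) : ℝ)) 2 μΩ
          = ENNReal.ofReal ((N:ℝ)^((1:ℝ)-θ)) := by
        rw [eLpNorm_const _ (by norm_num) hμ0]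
        simp [measure_univ,
          Real.enorm_eq_ofReal (show (0:ℝ) ≤ (N:ℝ)^((1:ℝ)-θ) from by positivity)]
      calc ENNReal.ofReal ((N:ℝ)^((1:ℝ)-θ))
          = eLpNorm (fun _ : ℝ => ((N:ℝ)^((1:ℝ)-θ) : ℝ)) 2 μΩ := hconst.symm
      _ ≤ eLpNorm (maxFn (matA θ N) (fC N)) 2 μΩ := eLpNorm_mono_ae_real hae
    have hprod : ENNReal.ofReal ((N:ℝ)^((1:ℝ)/2-θ)) * eLpNorm (fC N) 2 μΩ
        = ENNReal.ofReal ((N:ℝ)^((1:ℝ)-θ)) := by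
      rw [hLp, ← ENNReal.ofReal_mul (Real.rpow_nonneg (Nat.cast_nonneg N) _),
        ← Real.rpow_add hNpos, show (1:ℝ)/2 - θ + 1/2 = 1 - θ from by ring]
    have hkey : ENNReal.ofReal ((N:ℝ)^((1:ℝ)/2-θ)) * eLpNorm (fC N) 2 μΩ
        ≤ eLpNorm (maxFn (matA θ N) (fC N)) 2 μΩ := by
      rw [hprod]; exact hmaxlb
    have hstrong : ENNReal.ofReal ((N:ℝ)^((1:ℝ)/2-θ)) ≤ hStrong 2 (matA θ N) := by
      refine le_sInf fun K hK => ?_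
      have hKf := hK (fC N) (by rw [hof2]; exact memLp_fC N)
      rw [hof2] at hKf
      have h1 : ENNReal.ofReal ((N:ℝ)^((1:ℝ)/2-θ)) * eLpNorm (fC N) 2 μΩ
          ≤ K * eLpNorm (fC N) 2 μΩ := le_trans hkey hKf
      exact (ENNReal.mul_le_mul_iff_left hLpne0 hLpfin).1 h1
    exact ⟨matA θ N, norm_matA θ N, matA_log_le θ hθ0 hθ N hN, hstrong,
      fC N, memLp_fC N, hLpne0, hkey⟩
  refine ⟨part1, ?_⟩
  rintro ⟨C, hC⟩
  have key : ∀ N : ℕ, 1 ≤ N → ((N:ℝ)^((1:ℝ)/2-θ)) ≤ C * 2 := by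
    intro N hN
    obtain ⟨A, hnorm, hlogb, hstrong, -⟩ := part1 N hN
    have hNpos : (0:ℝ) < N := by exact_mod_cast hN
    have hN1 : (1:ℝ) ≤ N := by exact_mod_cast hN
    haveI : Nonempty (Fin N) := ⟨⟨0, hN⟩⟩
    haveI : Nonempty (Fin (2^N)) := ⟨⟨0, Nat.two_pow_pos N⟩⟩
    set S := ⨆ j : Fin (2^N), ⨆ k : Fin N,
      ‖A j k‖ * Real.logb 2 (2 + (((j:ℤ)-(k:ℤ)).natAbs : ℝ)) ^ θ with hS
    have hterm : ∀ (j : Fin (2^N)) (k : Fin N),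
        ‖A j k‖ * Real.logb 2 (2 + (((j:ℤ)-(k:ℤ)).natAbs : ℝ)) ^ θ ≤ 2 := by
      intro j k
      obtain ⟨hL1, hL2N⟩ := logb_bounds N hN j k
      set L : ℝ := Real.logb 2 (2 + (((j:ℤ)-(k:ℤ)).natAbs : ℝ))
      rw [hnorm]
      have h1 : L^θ ≤ (2*(N:ℝ))^θ := Real.rpow_le_rpow (by linarith) hL2N hθ0.le
      have h2 : (2*(N:ℝ))^θ = 2^θ * (N:ℝ)^θ := Real.mul_rpow (by norm_num) (Nat.cast_nonneg N)
      have h3 : (N:ℝ)^(-θ) * (N:ℝ)^θ = 1 := by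
        rw [← Real.rpow_add hNpos]
        simp
      have h4 : (2:ℝ)^θ ≤ 2 := by
        calc (2:ℝ)^θ ≤ 2^(1:ℝ) := Real.rpow_le_rpow_of_exponent_le (by norm_num) (by linarith)
        _ = 2 := Real.rpow_one 2
      have h5 : (0:ℝ) ≤ (N:ℝ)^(-θ) := Real.rpow_nonneg (Nat.cast_nonneg N) _
      calc (N:ℝ)^(-θ) * L^θ ≤ (N:ℝ)^(-θ) * (2*(N:ℝ))^θ :=
            mul_le_mul_of_nonneg_left h1 h5
      _ = 2^θ * ((N:ℝ)^(-θ) * (N:ℝ)^θ) := by rw [h2]; ring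
      _ = 2^θ := by rw [h3, mul_one]
      _ ≤ 2 := h4
    have hS2 : S ≤ 2 := ciSup_le fun j => ciSup_le fun k => hterm j k
    have hS0 : 0 ≤ S := by
      have j0 : Fin (2^N) := Classical.arbitrary _
      have k0 : Fin N := Classical.arbitrary _
      have hL1 := (logb_bounds N hN j0 k0).1
      calc (0:ℝ) ≤ ‖A j0 k0‖ * Real.logb 2 (2 + (((j0:ℤ)-(k0:ℤ)).natAbs : ℝ)) ^ θ :=
            mul_nonneg (norm_nonneg _) (Real.rpow_nonneg (by linarith) θ)
      _ ≤ ⨆ k : Fin N, ‖A j0 k‖ * Real.logb 2 (2 + (((j0:ℤ)-(k:ℤ)).natAbs : ℝ)) ^ θ :=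
            le_ciSup (f := fun k : Fin N =>
              ‖A j0 k‖ * Real.logb 2 (2 + (((j0:ℤ)-(k:ℤ)).natAbs : ℝ)) ^ θ)
              (Set.Finite.bddAbove (Set.finite_range _)) k0
      _ ≤ S := le_ciSup (f := fun j => ⨆ k : Fin N,
            ‖A j k‖ * Real.logb 2 (2 + (((j:ℤ)-(k:ℤ)).natAbs : ℝ)) ^ θ)
            (Set.Finite.bddAbove (Set.finite_range _)) j0
    have hchain : ENNReal.ofReal ((N:ℝ)^((1:ℝ)/2-θ)) ≤ ENNReal.ofReal (C * S) :=
      le_trans hstrong (hC (2^N) N A)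
    have hle : (N:ℝ)^((1:ℝ)/2-θ) ≤ C * S := by
      rcases ENNReal.ofReal_le_ofReal_iff'.1 hchain with h | h
      · exact h
      · exfalso
        have : (0:ℝ) < (N:ℝ)^((1:ℝ)/2-θ) := Real.rpow_pos_of_pos hNpos _
        linarith
    have hCpos : 0 < C := by
      by_contra hc
      push_neg at hc
      have hp : (0:ℝ) < (N:ℝ)^((1:ℝ)/2-θ) := Real.rpow_pos_of_pos hNpos _
      nlinarith
    calc (N:ℝ)^((1:ℝ)/2-θ) ≤ C * S := hle
    _ ≤ C * 2 := by nlinarith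
  set α : ℝ := (1:ℝ)/2 - θ with hα
  have hα0 : 0 < α := by rw [hα]; linarith
  set D : ℝ := max (C*2) 1 with hD
  have hD1 : (1:ℝ) ≤ D := le_max_right _ _
  have hDpos : (0:ℝ) < D := by linarith
  have hkey' : ∀ N : ℕ, 1 ≤ N → ((N:ℝ))^α ≤ D := fun N hN =>
    le_trans (key N hN) (le_max_left _ _)
  obtain ⟨n, hn⟩ := exists_nat_ge (D^((1:ℝ)/α) + 1)
  have hD2 : (0:ℝ) ≤ D^((1:ℝ)/α) := Real.rpow_nonneg hDpos.le _
  have hn1 : 1 ≤ n := by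
    rcases Nat.eq_zero_or_pos n with h0 | h
    · exfalso
      rw [h0] at hn
      push_cast at hn
      linarith
    · exact h
  have hlt : D^((1:ℝ)/α) < (n:ℝ) := by linarith
  have hcontr : D < (n:ℝ)^α := by
    calc D = (D^((1:ℝ)/α))^α := by
          rw [← Real.rpow_mul hDpos.le, one_div, inv_mul_cancel₀ hα0.ne', Real.rpow_one]
    _ < (n:ℝ)^α := Real.rpow_lt_rpow hD2 hlt hα0
  linarith [hkey' n hn1]
end
end
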